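/- Let a,b,c,d ∈ ℂ and n ∈ ℕ, and define the Wilson polynomial function y : ℂ → ℂ by y(x) = Σ_{k=0}^{n} [(−n)_k·(n + a + b + c + d − 1)_k / k!]·(a+b+k)_{n−k}·(a+c+k)_{n−k}·(a+d+k)_{n−k}·∏_{j=0}^{k−1}((a + j)² + x²). Then for every x ∈ ℂ with x·(x − i/2)·(x + i/2) ≠ 0: (x⁴ − (ab + ac + ad + bc + bd + cd)·x² + abcd)·(𝒟(𝒟y))(x) + ((a + b + c + d)·x² − (abc + abd + acd + bcd))·(𝒮(𝒟y))(x) − n·(n − 1 + a + b + c + d)·y(x) = 0. -/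

import Mathlib

open Complex Finset

/-- Wilson divided-difference operator. -/
noncomputable def Dw (f : ℂ → ℂ) (x : ℂ) : ℂ :=
  (f (x + I/2) - f (x - I/2)) / (2 * I * x)

/-- Averaging operator. -/
noncomputable def Sw (f : ℂ → ℂ) (x : ℂ) : ℂ :=
  (f (x + I/2) + f (x - I/2)) / 2

/-- Pochhammer symbol (t)_m = ∏_{j=0}^{m−1}(t + j). -/
noncomputable def poch (t : ℂ) (m : ℕ) : ℂ :=
  ∏ j ∈ Finset.range m, (t + j)

/-- The Wilson polynomial W_n(x²; a,b,c,d) in division-free form. -/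
noncomputable def wilson (a b c d : ℂ) (n : ℕ) (x : ℂ) : ℂ :=
  ∑ k ∈ Finset.range (n+1),
    (poch (-(n : ℂ)) k * poch ((n : ℂ) + a + b + c + d - 1) k / (Nat.factorial k : ℂ))
      * poch (a + b + k) (n - k) * poch (a + c + k) (n - k) * poch (a + d + k) (n - k)
      * ∏ j ∈ Finset.range k, ((a + j)^2 + x^2)

lemma poch_succ (t : ℂ) (k : ℕ) : poch t (k+1) = poch t k * (t + k) := by
  simp [poch, Finset.prod_range_succ]

lemma poch_succ' (t : ℂ) (k : ℕ) : poch t (k+1) = t * poch (t+1) k := by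
  rw [poch, Finset.prod_range_succ', poch, mul_comm]
  congr 1
  · norm_num
  · exact Finset.prod_congr rfl (fun j _ => by push_cast; ring)

lemma quad_prod (a x : ℂ) (k : ℕ) :
    ∏ j ∈ Finset.range k, ((a+(j:ℂ))^2 + x^2) = poch (a + I*x) k * poch (a - I*x) k := by
  rw [poch, poch, ← Finset.prod_mul_distrib]
  exact Finset.prod_congr rfl (fun j _ => by linear_combination (x^2) * Complex.I_sq)

lemma quad_up (a x : ℂ) (k : ℕ) :
    ∏ j ∈ Finset.range k, ((a+(j:ℂ))^2 + (x+I)^2)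
      = poch (a + I*x - 1) k * poch (a - I*x + 1) k := by
  rw [quad_prod a (x+I) k,
    show a + I*(x+I) = a + I*x - 1 from by linear_combination Complex.I_mul_I,
    show a - I*(x+I) = a - I*x + 1 from by linear_combination (-1 : ℂ) * Complex.I_mul_I]

lemma quad_down (a x : ℂ) (k : ℕ) :
    ∏ j ∈ Finset.range k, ((a+(j:ℂ))^2 + (x-I)^2)
      = poch (a + I*x + 1) k * poch (a - I*x - 1) k := by
  rw [quad_prod a (x-I) k,
    show a + I*(x-I) = a + I*x + 1 from by linear_combination (-1 : ℂ) * Complex.I_mul_I,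
    show a - I*(x-I) = a - I*x - 1 from by linear_combination Complex.I_mul_I]

lemma termE (a b c d x : ℂ) (k : ℕ) :
    (a-I*x)*(b-I*x)*(c-I*x)*(d-I*x)*(2*I*x+1)
      * (poch (a+I*x-1) (k+1) * poch (a-I*x+1) (k+1)
          - poch (a+I*x) (k+1) * poch (a-I*x) (k+1))
    - (a+I*x)*(b+I*x)*(c+I*x)*(d+I*x)*(2*I*x-1)
      * (poch (a+I*x) (k+1) * poch (a-I*x) (k+1)
          - poch (a+I*x+1) (k+1) * poch (a-I*x-1) (k+1))
    = (2*I*x)*(2*I*x-1)*(2*I*x+1)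
      * (((k:ℂ)+1) * (a+b+c+d+k) * (poch (a+I*x) (k+1) * poch (a-I*x) (k+1))
          - ((k:ℂ)+1)*(a+b+k)*(a+c+k)*(a+d+k) * (poch (a+I*x) k * poch (a-I*x) k)) := by
  have e1 : poch (a+I*x-1) (k+1) = (a+I*x-1) * poch (a+I*x) k := by
    rw [poch_succ', show a+I*x-1+1 = a+I*x from by ring]
  have e6 : poch (a-I*x-1) (k+1) = (a-I*x-1) * poch (a-I*x) k := by
    rw [poch_succ', show a-I*x-1+1 = a-I*x from by ring]
  have e2 : poch (a-I*x+1) (k+1) = poch (a-I*x+1) k * (a-I*x+1+k) := poch_succ _ _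
  have e3 : poch (a+I*x) (k+1) = poch (a+I*x) k * (a+I*x+k) := poch_succ _ _
  have e4 : poch (a-I*x) (k+1) = poch (a-I*x) k * (a-I*x+k) := poch_succ _ _
  have e5 : poch (a+I*x+1) (k+1) = poch (a+I*x+1) k * (a+I*x+1+k) := poch_succ _ _
  have hu : (a+I*x) * poch (a+I*x+1) k = poch (a+I*x) k * (a+I*x+k) := by
    rw [← poch_succ', poch_succ]
  have hv : (a-I*x) * poch (a-I*x+1) k = poch (a-I*x) k * (a-I*x+k) := by
    rw [← poch_succ', poch_succ]
  rw [e1, e2, e3, e4, e5, e6]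
  linear_combination
    ((b-I*x)*(c-I*x)*(d-I*x)*(2*I*x+1)*(a+I*x-1)*(a-I*x+1+(k:ℂ))*poch (a+I*x) k) * hv
    + ((b+I*x)*(c+I*x)*(d+I*x)*(2*I*x-1)*(a+I*x+1+(k:ℂ))*(a-I*x-1)*poch (a-I*x) k) * hu

lemma termEPhi (a b c d x : ℂ) (k : ℕ) :
    (a-I*x)*(b-I*x)*(c-I*x)*(d-I*x)*(2*I*x+1)
      * ((∏ j ∈ Finset.range (k+1), ((a+(j:ℂ))^2+(x+I)^2))
          - ∏ j ∈ Finset.range (k+1), ((a+(j:ℂ))^2+x^2))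
    - (a+I*x)*(b+I*x)*(c+I*x)*(d+I*x)*(2*I*x-1)
      * ((∏ j ∈ Finset.range (k+1), ((a+(j:ℂ))^2+x^2))
          - ∏ j ∈ Finset.range (k+1), ((a+(j:ℂ))^2+(x-I)^2))
    = (2*I*x)*(2*I*x-1)*(2*I*x+1)
      * (((k:ℂ)+1)*(a+b+c+d+k) * ∏ j ∈ Finset.range (k+1), ((a+(j:ℂ))^2+x^2)
          - ((k:ℂ)+1)*(a+b+k)*(a+c+k)*(a+d+k) * ∏ j ∈ Finset.range k, ((a+(j:ℂ))^2+x^2)) := by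
  rw [quad_up, quad_down, quad_prod a x (k+1), quad_prod a x k]
  exact termE a b c d x k

noncomputable def wc (a b c d : ℂ) (n k : ℕ) : ℂ :=
  (poch (-(n : ℂ)) k * poch ((n : ℂ) + a + b + c + d - 1) k / (Nat.factorial k : ℂ))
    * poch (a + b + k) (n - k) * poch (a + c + k) (n - k) * poch (a + d + k) (n - k)

lemma wilson_eq (a b c d : ℂ) (n : ℕ) (z : ℂ) :
    wilson a b c d n z
      = ∑ k ∈ Finset.range (n+1), wc a b c d n k * ∏ j ∈ Finset.range k, ((a+(j:ℂ))^2 + z^2) :=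
  rfl

lemma coeff (a b c d : ℂ) (n k : ℕ) (h : k < n) :
    wc a b c d n (k+1) * (((k:ℂ)+1) * (a+b+k) * (a+c+k) * (a+d+k))
      = wc a b c d n k * (((k:ℂ)-n) * ((k:ℂ)+n+a+b+c+d-1)) := by
  have hnk : n - k = (n - (k+1)) + 1 := by omega
  have A1 : poch (-(n:ℂ)) (k+1) = poch (-(n:ℂ)) k * (-(n:ℂ)+k) := poch_succ _ _
  have A2 : poch ((n:ℂ)+a+b+c+d-1) (k+1)
      = poch ((n:ℂ)+a+b+c+d-1) k * ((n:ℂ)+a+b+c+d-1+k) := poch_succ _ _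
  have A3 : poch (a+b+(k:ℂ)) (n-k) = (a+b+(k:ℂ)) * poch (a+b+((k+1:ℕ):ℂ)) (n-(k+1)) := by
    rw [show a+b+((k+1:ℕ):ℂ) = a+b+(k:ℂ)+1 from by push_cast; ring, hnk, poch_succ']
  have A4 : poch (a+c+(k:ℂ)) (n-k) = (a+c+(k:ℂ)) * poch (a+c+((k+1:ℕ):ℂ)) (n-(k+1)) := by
    rw [show a+c+((k+1:ℕ):ℂ) = a+c+(k:ℂ)+1 from by push_cast; ring, hnk, poch_succ']
  have A5 : poch (a+d+(k:ℂ)) (n-k) = (a+d+(k:ℂ)) * poch (a+d+((k+1:ℕ):ℂ)) (n-(k+1)) := by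
    rw [show a+d+((k+1:ℕ):ℂ) = a+d+(k:ℂ)+1 from by push_cast; ring, hnk, poch_succ']
  have hf : (Nat.factorial k : ℂ) ≠ 0 := Nat.cast_ne_zero.2 (Nat.factorial_ne_zero _)
  have hk1 : ((k:ℂ)+1) ≠ 0 := Nat.cast_add_one_ne_zero k
  have hfs : ((Nat.factorial (k+1) : ℕ) : ℂ) = ((k:ℂ)+1) * (Nat.factorial k : ℂ) := by
    rw [Nat.factorial_succ]; push_cast; ring
  simp only [wc, A1, A2, A3, A4, A5, hfs]
  field_simp
  ring

lemma key (a b c d : ℂ) (n : ℕ) (x : ℂ) :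
    (a-I*x)*(b-I*x)*(c-I*x)*(d-I*x)*(2*I*x+1)
        * (wilson a b c d n (x+I) - wilson a b c d n x)
      - (a+I*x)*(b+I*x)*(c+I*x)*(d+I*x)*(2*I*x-1)
        * (wilson a b c d n x - wilson a b c d n (x-I))
      - (2*I*x)*(2*I*x-1)*(2*I*x+1) * ((n:ℂ)*((n:ℂ)-1+a+b+c+d))
        * wilson a b c d n x = 0 := by
  have H : (a-I*x)*(b-I*x)*(c-I*x)*(d-I*x)*(2*I*x+1)
        * (wilson a b c d n (x+I) - wilson a b c d n x)
      - (a+I*x)*(b+I*x)*(c+I*x)*(d+I*x)*(2*I*x-1)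
        * (wilson a b c d n x - wilson a b c d n (x-I))
      = (2*I*x)*(2*I*x-1)*(2*I*x+1) * ((n:ℂ)*((n:ℂ)-1+a+b+c+d)) * wilson a b c d n x := by
    calc (a-I*x)*(b-I*x)*(c-I*x)*(d-I*x)*(2*I*x+1)
          * (wilson a b c d n (x+I) - wilson a b c d n x)
        - (a+I*x)*(b+I*x)*(c+I*x)*(d+I*x)*(2*I*x-1)
          * (wilson a b c d n x - wilson a b c d n (x-I))
        = ∑ k ∈ Finset.range (n+1), wc a b c d n k *
            ((a-I*x)*(b-I*x)*(c-I*x)*(d-I*x)*(2*I*x+1)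
              * ((∏ j ∈ Finset.range k, ((a+(j:ℂ))^2+(x+I)^2))
                  - ∏ j ∈ Finset.range k, ((a+(j:ℂ))^2+x^2))
            - (a+I*x)*(b+I*x)*(c+I*x)*(d+I*x)*(2*I*x-1)
              * ((∏ j ∈ Finset.range k, ((a+(j:ℂ))^2+x^2))
                  - ∏ j ∈ Finset.range k, ((a+(j:ℂ))^2+(x-I)^2))) := by
          rw [wilson_eq a b c d n (x+I), wilson_eq a b c d n x, wilson_eq a b c d n (x-I),
            ← Finset.sum_sub_distrib, ← Finset.sum_sub_distrib, Finset.mul_sum, Finset.mul_sum,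
            ← Finset.sum_sub_distrib]
          exact Finset.sum_congr rfl fun k _ => by ring
      _ = ∑ k ∈ Finset.range n, wc a b c d n (k+1) *
            ((a-I*x)*(b-I*x)*(c-I*x)*(d-I*x)*(2*I*x+1)
              * ((∏ j ∈ Finset.range (k+1), ((a+(j:ℂ))^2+(x+I)^2))
                  - ∏ j ∈ Finset.range (k+1), ((a+(j:ℂ))^2+x^2))
            - (a+I*x)*(b+I*x)*(c+I*x)*(d+I*x)*(2*I*x-1)
              * ((∏ j ∈ Finset.range (k+1), ((a+(j:ℂ))^2+x^2))
                  - ∏ j ∈ Finset.range (k+1), ((a+(j:ℂ))^2+(x-I)^2))) := by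
          rw [Finset.sum_range_succ']
          simp
      _ = ∑ k ∈ Finset.range n, (2*I*x)*(2*I*x-1)*(2*I*x+1) *
            (((k:ℂ)+1)*(a+b+c+d+k)
                * (wc a b c d n (k+1) * ∏ j ∈ Finset.range (k+1), ((a+(j:ℂ))^2+x^2))
              - ((k:ℂ)-n)*((k:ℂ)+n+a+b+c+d-1)
                * (wc a b c d n k * ∏ j ∈ Finset.range k, ((a+(j:ℂ))^2+x^2))) := by
          refine Finset.sum_congr rfl fun k hk => ?_
          have hkn : k < n := Finset.mem_range.mp hk
          have t := termEPhi a b c d x k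
          have co := coeff a b c d n k hkn
          linear_combination (wc a b c d n (k+1)) * t
            - ((2*I*x)*(2*I*x-1)*(2*I*x+1) * ∏ j ∈ Finset.range k, ((a+(j:ℂ))^2+x^2)) * co
      _ = (2*I*x)*(2*I*x-1)*(2*I*x+1) * ((n:ℂ)*((n:ℂ)-1+a+b+c+d)) * wilson a b c d n x := by
          rw [wilson_eq a b c d n x]
          have h1 : ∑ k ∈ Finset.range n,
              (((k:ℂ)+1)*(a+b+c+d+k)
                * (wc a b c d n (k+1) * ∏ j ∈ Finset.range (k+1), ((a+(j:ℂ))^2+x^2)))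
              = ∑ k ∈ Finset.range (n+1),
              ((k:ℂ)*(a+b+c+d+k-1)
                * (wc a b c d n k * ∏ j ∈ Finset.range k, ((a+(j:ℂ))^2+x^2))) := by
            rw [Finset.sum_range_succ']
            simp
            exact Finset.sum_congr rfl fun k _ => by ring
          have h2 : ∑ k ∈ Finset.range n,
              (((k:ℂ)-n)*((k:ℂ)+n+a+b+c+d-1)
                * (wc a b c d n k * ∏ j ∈ Finset.range k, ((a+(j:ℂ))^2+x^2)))
              = ∑ k ∈ Finset.range (n+1),
              (((k:ℂ)-n)*((k:ℂ)+n+a+b+c+d-1)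
                * (wc a b c d n k * ∏ j ∈ Finset.range k, ((a+(j:ℂ))^2+x^2))) := by
            rw [Finset.sum_range_succ]
            simp
          calc ∑ k ∈ Finset.range n, (2*I*x)*(2*I*x-1)*(2*I*x+1) *
                (((k:ℂ)+1)*(a+b+c+d+k)
                    * (wc a b c d n (k+1) * ∏ j ∈ Finset.range (k+1), ((a+(j:ℂ))^2+x^2))
                  - ((k:ℂ)-n)*((k:ℂ)+n+a+b+c+d-1)
                    * (wc a b c d n k * ∏ j ∈ Finset.range k, ((a+(j:ℂ))^2+x^2)))
              = (2*I*x)*(2*I*x-1)*(2*I*x+1) *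
                ((∑ k ∈ Finset.range n,
                  (((k:ℂ)+1)*(a+b+c+d+k)
                    * (wc a b c d n (k+1) * ∏ j ∈ Finset.range (k+1), ((a+(j:ℂ))^2+x^2))))
                - ∑ k ∈ Finset.range n,
                  (((k:ℂ)-n)*((k:ℂ)+n+a+b+c+d-1)
                    * (wc a b c d n k * ∏ j ∈ Finset.range k, ((a+(j:ℂ))^2+x^2)))) := by
                rw [← Finset.sum_sub_distrib, Finset.mul_sum]
            _ = (2*I*x)*(2*I*x-1)*(2*I*x+1) * ((n:ℂ)*((n:ℂ)-1+a+b+c+d)) *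
                ∑ k ∈ Finset.range (n+1),
                  wc a b c d n k * ∏ j ∈ Finset.range k, ((a+(j:ℂ))^2+x^2) := by
                rw [h1, h2, ← Finset.sum_sub_distrib, Finset.mul_sum, Finset.mul_sum]
                exact Finset.sum_congr rfl fun k _ => by ring
  linear_combination H

lemma key' (a b c d : ℂ) (n : ℕ) (x : ℂ) :
    ((x^4 - (a*b + a*c + a*d + b*c + b*d + c*d) * x^2 + a*b*c*d)
        + I*x*((a + b + c + d) * x^2 - (a*b*c + a*b*d + a*c*d + b*c*d))) * (2*I*x+1)
      * (wilson a b c d n (x+I) - wilson a b c d n x)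
    - ((x^4 - (a*b + a*c + a*d + b*c + b*d + c*d) * x^2 + a*b*c*d)
        - I*x*((a + b + c + d) * x^2 - (a*b*c + a*b*d + a*c*d + b*c*d))) * (2*I*x-1)
      * (wilson a b c d n x - wilson a b c d n (x-I))
    - (2*I*x)*(2*I*x-1)*(2*I*x+1) * ((n:ℂ)*((n:ℂ)-1+a+b+c+d)) * wilson a b c d n x = 0 := by
  have hk := key a b c d n x
  linear_combination hk +
    ((-(a*b + a*c + a*d + b*c + b*d + c*d)*x^2 + (a+b+c+d)*I*x^3 + (1-I^2)*x^4) * (2*I*x+1)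
        * (wilson a b c d n (x+I) - wilson a b c d n x)
      - (-(a*b + a*c + a*d + b*c + b*d + c*d)*x^2 - (a+b+c+d)*I*x^3 + (1-I^2)*x^4) * (2*I*x-1)
        * (wilson a b c d n x - wilson a b c d n (x-I))) * Complex.I_sq

set_option maxRecDepth 8000 in
set_option maxHeartbeats 1600000 in
theorem stmt_15 (a b c d : ℂ) (n : ℕ) :
    ∀ x : ℂ, x * (x - I/2) * (x + I/2) ≠ 0 →
      (x^4 - (a*b + a*c + a*d + b*c + b*d + c*d) * x^2 + a*b*c*d)
          * Dw (Dw (fun t => wilson a b c d n t)) x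
        + ((a + b + c + d) * x^2 - (a*b*c + a*b*d + a*c*d + b*c*d))
          * Sw (Dw (fun t => wilson a b c d n t)) x
        - (n : ℂ) * ((n : ℂ) - 1 + a + b + c + d) * wilson a b c d n x = 0 := by
  intro x hx
  rcases mul_ne_zero_iff.mp hx with ⟨h12, h3⟩
  rcases mul_ne_zero_iff.mp h12 with ⟨h1, h2⟩
  have hI : (I : ℂ) ≠ 0 := Complex.I_ne_zero
  have hd1 : (2*I*x - 1 : ℂ) ≠ 0 := by
    rw [show (2*I*x - 1 : ℂ) = 2*I*(x + I/2) from by linear_combination (-1:ℂ) * Complex.I_mul_I]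
    exact mul_ne_zero (mul_ne_zero two_ne_zero hI) h3
  have hd2 : (2*I*x + 1 : ℂ) ≠ 0 := by
    rw [show (2*I*x + 1 : ℂ) = 2*I*(x - I/2) from by linear_combination Complex.I_mul_I]
    exact mul_ne_zero (mul_ne_zero two_ne_zero hI) h2
  have hd0 : (2*I*x : ℂ) ≠ 0 := mul_ne_zero (mul_ne_zero two_ne_zero hI) h1
  simp only [Dw, Sw]
  rw [show x + I/2 + I/2 = x + I from by ring, show x + I/2 - I/2 = x from by ring,
    show x - I/2 + I/2 = x from by ring, show x - I/2 - I/2 = x - I from by ring,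
    show 2*I*(x + I/2) = 2*I*x - 1 from by linear_combination Complex.I_mul_I,
    show 2*I*(x - I/2) = 2*I*x + 1 from by linear_combination (-1:ℂ) * Complex.I_mul_I]
  have hk := key' a b c d n x
  refine mul_left_cancel₀ (show ((2*I*x)*((2*I*x-1)*(2*I*x+1)) : ℂ) ≠ 0 from
    mul_ne_zero hd0 (mul_ne_zero hd1 hd2)) ?_
  rw [mul_zero]
  field_simp
  linear_combination hk
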